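/- Let m ≥ 1, let q_1,…,q_m be real numbers, let λ > 0 be real, and let a ≥ 0 be an integer. Then Σ_{N=0}^{a} (λ^N / N!) · Σ_{(r_1,…,r_N): r_i ≥ 1, r_1+⋯+r_N = a} ∏_{i=1}^{N} ( (q_1^{r_i} + ⋯ + q_m^{r_i}) / r_i ) = Σ_{(a_1,…,a_m) ∈ ℕ^m, a_1+⋯+a_m = a} ∏_{j=1}^{m} λ^{(a_j)} q_j^{a_j} / a_j!. (This is the coefficient of x^a in the paper's formal power series identity Σ_{N≥0} (λ^N/N!) (Σ_{j=1}^m Σ_{r≥1} q_j^r x^r / r)^N = ∏_{j=1}^m Σ_{a_j ≥ 0} (Γ(λ+a_j)/(a_j! Γ(λ))) q_j^{a_j} x^{a_j}; for N = 0 the inner sum over compositions is 1 if a = 0 and 0 otherwise.) -/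

import Mathlib

open Finset PowerSeries

namespace CoeffExpLogAux

/-- Split off the first coordinate of a sum over `antidiagonalTuple (N+1) n`. -/
lemma sum_adt_succ {N n : ℕ} (F : (Fin (N + 1) → ℕ) → ℝ) :
    ∑ c ∈ Finset.Nat.antidiagonalTuple (N + 1) n, F c
      = ∑ rs ∈ Finset.HasAntidiagonal.antidiagonal n,
          ∑ c ∈ Finset.Nat.antidiagonalTuple N rs.2, F (Fin.cons rs.1 c) := by
  rw [Finset.sum_sigma']
  refine Finset.sum_nbij' (fun c => ⟨(c 0, ∑ i, Fin.tail c i), Fin.tail c⟩)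
    (fun x => Fin.cons x.1.1 x.2) ?_ ?_ ?_ ?_ ?_
  · intro c hc
    rw [Finset.Nat.mem_antidiagonalTuple] at hc
    simp only [Finset.mem_sigma, Finset.HasAntidiagonal.mem_antidiagonal,
      Finset.Nat.mem_antidiagonalTuple]
    refine ⟨?_, trivial⟩
    rw [← hc, Fin.sum_univ_succ]
    rfl
  · rintro ⟨⟨r, s⟩, c⟩ hx
    simp only [Finset.mem_sigma, Finset.HasAntidiagonal.mem_antidiagonal,
      Finset.Nat.mem_antidiagonalTuple] at hx
    rw [Finset.Nat.mem_antidiagonalTuple, Fin.sum_cons, hx.2, hx.1]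
  · intro c _
    exact Fin.cons_self_tail c
  · rintro ⟨⟨r, s⟩, c⟩ hx
    simp only [Finset.mem_sigma, Finset.HasAntidiagonal.mem_antidiagonal,
      Finset.Nat.mem_antidiagonalTuple] at hx
    simp only [Fin.cons_zero, Fin.tail_cons]
    rw [hx.2]
  · intro c _
    simp [Fin.cons_self_tail]

/-- A sum over antidiagonal tuples of a product is the coefficient of a product of
power series. -/
lemma sum_adt_prod_eq_coeff (M : ℕ) (h : Fin M → ℕ → ℝ) (n : ℕ) :
    ∑ b ∈ Finset.Nat.antidiagonalTuple M n, ∏ j, h j (b j)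
      = PowerSeries.coeff n (∏ j, PowerSeries.mk (h j)) := by
  induction M generalizing n with
  | zero =>
    cases n with
    | zero => simp [Finset.Nat.antidiagonalTuple_zero_zero]
    | succ k => simp [Finset.Nat.antidiagonalTuple_zero_succ, PowerSeries.coeff_one]
  | succ M ih =>
    rw [sum_adt_succ (fun c => ∏ j, h j (c j)), Fin.prod_univ_succ,
      PowerSeries.coeff_mul]
    refine Finset.sum_congr rfl fun rs _ => ?_
    rw [← ih (fun j => h j.succ) rs.2, PowerSeries.coeff_mk, Finset.mul_sum]
    refine Finset.sum_congr rfl fun c _ => ?_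
    rw [Fin.prod_univ_succ]
    simp [Fin.cons_zero, Fin.cons_succ]

/-- The operator `φ ↦ X * φ'` on power series, defined coefficientwise. -/
noncomputable def T (φ : ℝ⟦X⟧) : ℝ⟦X⟧ := PowerSeries.mk fun n => (n : ℝ) * coeff n φ

lemma coeff_T (n : ℕ) (φ : ℝ⟦X⟧) : coeff n (T φ) = (n : ℝ) * coeff n φ :=
  PowerSeries.coeff_mk _ _

lemma T_one : T 1 = 0 := by
  ext n
  rcases n with _ | n <;> simp [coeff_T, PowerSeries.coeff_one]

lemma T_mul (φ ψ : ℝ⟦X⟧) : T (φ * ψ) = T φ * ψ + φ * T ψ := by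
  ext n
  simp only [coeff_T, map_add, PowerSeries.coeff_mul, Finset.mul_sum,
    ← Finset.sum_add_distrib]
  refine Finset.sum_congr rfl fun rs hrs => ?_
  rw [Finset.HasAntidiagonal.mem_antidiagonal] at hrs
  rw [← hrs]
  push_cast
  ring

lemma T_prod {ι : Type*} [DecidableEq ι] (s : Finset ι) (g e : ι → ℝ⟦X⟧)
    (h : ∀ j ∈ s, T (g j) = e j * g j) :
    T (∏ j ∈ s, g j) = (∑ j ∈ s, e j) * ∏ j ∈ s, g j := by
  induction s using Finset.induction with
  | empty => simp [T_one]
  | @insert x s' hx ih =>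
    rw [Finset.prod_insert hx, Finset.sum_insert hx, T_mul,
      h x (Finset.mem_insert_self x s'),
      ih fun j hj => h j (Finset.mem_insert_of_mem hj)]
    ring

end CoeffExpLogAux

open CoeffExpLogAux

/-- Coefficient of `x^a` in the formal power series identity
`Σ_N (λ^N/N!) (Σ_j Σ_{r≥1} q_j^r x^r / r)^N = ∏_j Σ_{a_j} λ^{(a_j)} q_j^{a_j} x^{a_j}/a_j!`:
the left-hand inner sum is over compositions of `a` into `N` positive parts, and
`λ^{(k)} = λ(λ+1)⋯(λ+k-1)` is the ascending factorial. -/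
theorem coeff_exp_log_identity (m : ℕ) (hm : 1 ≤ m) (q : Fin m → ℝ) (lam : ℝ)
    (hlam : 0 < lam) (a : ℕ) :
    (∑ N ∈ Finset.range (a + 1), lam ^ N / (N.factorial : ℝ) *
        ∑ c ∈ (Finset.Nat.antidiagonalTuple N a).filter (fun c => ∀ i, 0 < c i),
          ∏ i : Fin N, ((∑ j : Fin m, q j ^ c i) / (c i : ℝ))) =
      ∑ b ∈ Finset.Nat.antidiagonalTuple m a,
        ∏ j : Fin m,
          ((∏ i ∈ Finset.range (b j), (lam + (i : ℝ))) * q j ^ b j / ((b j).factorial : ℝ)) := by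
  classical
  set f : ℝ⟦X⟧ := PowerSeries.mk (fun r => (∑ j, q j ^ r) / (r : ℝ)) with hf
  set fp : ℝ⟦X⟧ := PowerSeries.mk (fun r => if r = 0 then 0 else ∑ j, q j ^ r) with hfp
  set g : Fin m → ℝ⟦X⟧ := fun j => PowerSeries.mk
    (fun b => (∏ i ∈ Finset.range b, (lam + (i : ℝ))) * q j ^ b / (b.factorial : ℝ)) with hg
  set geom : Fin m → ℝ⟦X⟧ := fun j => PowerSeries.mk (fun r => q j ^ r) with hgeom
  -- T f = fp
  have hTf : T f = fp := by
    ext n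
    rcases eq_or_ne n 0 with h | h
    · subst h; simp [coeff_T, hf, hfp, PowerSeries.coeff_mk]
    · have hn : (n : ℝ) ≠ 0 := Nat.cast_ne_zero.mpr h
      simp only [coeff_T, hf, hfp, PowerSeries.coeff_mk, if_neg h]
      rw [mul_comm, div_mul_cancel₀ _ hn]
  -- coefficients of f^N vanish below N
  have hfX : (X : ℝ⟦X⟧) ∣ f := PowerSeries.X_dvd_iff.mpr (by
    simp [hf, PowerSeries.constantCoeff_mk])
  have hcoeff_fpow : ∀ {s N : ℕ}, s < N → coeff s (f ^ N) = 0 := by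
    intro s N hsN
    exact PowerSeries.X_pow_dvd_iff.mp (pow_dvd_pow_of_dvd hfX N) s hsN
  -- T (f^(N+1)) = (N+1) • (fp * f^N)
  have hTpow : ∀ N : ℕ, T (f ^ (N + 1)) = (N + 1 : ℕ) • (fp * f ^ N) := by
    intro N
    induction N with
    | zero => simp [pow_one, hTf]
    | succ N ih =>
      have hsplit : f ^ (N + 2) = f * f ^ (N + 1) := by ring
      have hthis : f * (fp * f ^ N) = fp * f ^ (N + 1) := by ring
      rw [hsplit, T_mul, ih, hTf, mul_smul_comm, hthis, succ_nsmul]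
      exact add_comm _ _
  -- the per-factor ODE
  have hgeom_mul : ∀ j, (1 - PowerSeries.C (q j) * X) * geom j = 1 := by
    intro j
    ext n
    rcases n with _ | n
    · simp [hgeom, mul_assoc, PowerSeries.coeff_mk, PowerSeries.coeff_one,
        PowerSeries.coeff_C_mul, PowerSeries.coeff_zero_X_mul, sub_mul]
    · rw [sub_mul, one_mul, map_sub, mul_assoc, PowerSeries.coeff_C_mul,
        PowerSeries.coeff_succ_X_mul, hgeom]
      simp only [PowerSeries.coeff_mk, PowerSeries.coeff_one, Nat.succ_ne_zero, if_false]
      ring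
  have hode : ∀ j, (1 - PowerSeries.C (q j) * X) * T (g j)
      = PowerSeries.C (lam * q j) * (X * g j) := by
    intro j
    ext n
    rcases n with _ | n
    · rw [sub_mul, one_mul, map_sub, mul_assoc, PowerSeries.coeff_C_mul,
        PowerSeries.coeff_zero_X_mul, coeff_T, PowerSeries.coeff_C_mul,
        PowerSeries.coeff_zero_X_mul]
      norm_num
    · have hfac : ((n.factorial : ℝ)) ≠ 0 := Nat.cast_ne_zero.mpr n.factorial_ne_zero
      have hn1 : ((n : ℝ) + 1) ≠ 0 := by positivity
      simp only [sub_mul, one_mul, map_sub, mul_assoc, PowerSeries.coeff_C_mul,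
        PowerSeries.coeff_succ_X_mul, coeff_T, hg, PowerSeries.coeff_mk]
      rw [Finset.prod_range_succ, Nat.factorial_succ]
      push_cast
      field_simp
      ring
  have hTg : ∀ j, T (g j)
      = PowerSeries.C (lam * q j) * (X * (geom j * g j)) := by
    intro j
    linear_combination (geom j) * hode j + (-(T (g j))) * hgeom_mul j
  -- fp as a sum over j
  have hfpe : PowerSeries.C lam * fp
      = ∑ j, PowerSeries.C (lam * q j) * (X * geom j) := by
    ext n
    rcases n with _ | n
    · simp [hfp, PowerSeries.coeff_C_mul, PowerSeries.coeff_mk,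
        PowerSeries.coeff_zero_X_mul]
    · simp only [map_sum, PowerSeries.coeff_C_mul, PowerSeries.coeff_succ_X_mul,
        hfp, hgeom, PowerSeries.coeff_mk, if_neg (Nat.succ_ne_zero n)]
      rw [Finset.mul_sum]
      refine Finset.sum_congr rfl fun j _ => ?_
      rw [pow_succ]
      ring
  -- the ODE for the product
  have hTG : T (∏ j, g j) = (PowerSeries.C lam * fp) * ∏ j, g j := by
    rw [T_prod Finset.univ g (fun j => PowerSeries.C (lam * q j) * (X * geom j))
      (fun j _ => by rw [hTg j]; ring), hfpe]
  -- the two coefficient sequences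
  set Rc : ℕ → ℝ := fun n => coeff n (∏ j, g j) with hRc
  set Lc : ℕ → ℝ := fun n => ∑ N ∈ Finset.range (n + 1),
    lam ^ N / (N.factorial : ℝ) * coeff n (f ^ N) with hLc
  have hR0 : Rc 0 = 1 := by
    rw [hRc]
    simp only [PowerSeries.coeff_zero_eq_constantCoeff_apply, map_prod]
    rw [Finset.prod_eq_one]
    intro j _
    simp [hg, PowerSeries.constantCoeff_mk]
  have hL0 : Lc 0 = 1 := by
    rw [hLc]
    simp
  -- recurrence for Rc
  have hRrec : ∀ n : ℕ, (n : ℝ) * Rc n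
      = lam * ∑ rs ∈ Finset.HasAntidiagonal.antidiagonal n, coeff rs.1 fp * Rc rs.2 := by
    intro n
    have h1 := congrArg (coeff n) hTG
    rw [coeff_T, mul_assoc, PowerSeries.coeff_C_mul, PowerSeries.coeff_mul] at h1
    rw [hRc, h1]
  -- recurrence for Lc
  have hLrec : ∀ n : ℕ, (n : ℝ) * Lc n
      = lam * ∑ rs ∈ Finset.HasAntidiagonal.antidiagonal n, coeff rs.1 fp * Lc rs.2 := by
    intro n
    have step1 : (n : ℝ) * Lc n
        = ∑ N ∈ Finset.range n,
            lam * (lam ^ N / (N.factorial : ℝ) * coeff n (fp * f ^ N)) := by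
      rw [hLc, Finset.mul_sum, Finset.sum_range_succ']
      have h0 : (n : ℝ) * (lam ^ 0 / ((Nat.factorial 0 : ℕ) : ℝ) * coeff n (f ^ 0)) = 0 := by
        rcases eq_or_ne n 0 with h | h
        · simp [h]
        · simp [pow_zero, PowerSeries.coeff_one, h]
      rw [h0, add_zero]
      refine Finset.sum_congr rfl fun N _ => ?_
      have hc : (n : ℝ) * coeff n (f ^ (N + 1)) = ((N : ℝ) + 1) * coeff n (fp * f ^ N) := by
        rw [← coeff_T, hTpow N, map_nsmul]
        push_cast [nsmul_eq_mul]
        ring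
      have hfac : ((N.factorial : ℕ) : ℝ) ≠ 0 := Nat.cast_ne_zero.mpr N.factorial_ne_zero
      have hN1 : ((N : ℝ) + 1) ≠ 0 := by positivity
      calc (n : ℝ) * (lam ^ (N + 1) / ((N + 1).factorial : ℝ) * coeff n (f ^ (N + 1)))
          = lam ^ (N + 1) / ((N + 1).factorial : ℝ) * ((n : ℝ) * coeff n (f ^ (N + 1))) := by
            ring
        _ = lam ^ (N + 1) / ((N + 1).factorial : ℝ)
              * (((N : ℝ) + 1) * coeff n (fp * f ^ N)) := by rw [hc]
        _ = lam * (lam ^ N / (N.factorial : ℝ) * coeff n (fp * f ^ N)) := by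
            rw [Nat.factorial_succ]
            push_cast
            field_simp
            ring
    rw [step1, ← Finset.mul_sum]
    congr 1
    have step2 : ∀ N, lam ^ N / (N.factorial : ℝ) * coeff n (fp * f ^ N)
        = ∑ rs ∈ Finset.HasAntidiagonal.antidiagonal n,
            coeff rs.1 fp * (lam ^ N / (N.factorial : ℝ) * coeff rs.2 (f ^ N)) := by
      intro N
      rw [PowerSeries.coeff_mul, Finset.mul_sum]
      exact Finset.sum_congr rfl fun rs _ => by ring
    simp_rw [step2]
    rw [Finset.sum_comm]
    refine Finset.sum_congr rfl fun rs hrs => ?_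
    rw [← Finset.mul_sum]
    rcases eq_or_ne rs.1 0 with h0 | h0
    · rw [h0]
      simp [hfp, PowerSeries.coeff_mk]
    · congr 1
      rw [Finset.HasAntidiagonal.mem_antidiagonal] at hrs
      have h2 : rs.2 + 1 ≤ n := by omega
      rw [hLc]
      refine (Finset.sum_subset (Finset.range_subset_range.mpr h2) ?_).symm
      intro N _ hN2
      simp only [Finset.mem_range, not_lt] at hN2
      rw [hcoeff_fpow (by omega), mul_zero]
  -- Lc = Rc by strong induction
  have key : ∀ n, Lc n = Rc n := by
    intro n
    induction n using Nat.strong_induction_on with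
    | _ n ih =>
      match n, ih with
      | 0, _ => rw [hL0, hR0]
      | (k + 1), ih =>
        have hk1 : (((k : ℕ) + 1 : ℕ) : ℝ) ≠ 0 := by positivity
        refine mul_left_cancel₀ hk1 ?_
        rw [hLrec, hRrec]
        congr 1
        refine Finset.sum_congr rfl fun rs hrs => ?_
        rcases eq_or_ne rs.1 0 with h0 | h0
        · rw [h0]
          simp [hfp, PowerSeries.coeff_mk]
        · rw [Finset.HasAntidiagonal.mem_antidiagonal] at hrs
          rw [ih rs.2 (by omega)]
  -- final assembly
  have hRHS : (∑ b ∈ Finset.Nat.antidiagonalTuple m a, ∏ j,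
        ((∏ i ∈ Finset.range (b j), (lam + (i : ℝ))) * q j ^ b j / ((b j).factorial : ℝ)))
      = Rc a := by
    rw [hRc, hg]
    exact sum_adt_prod_eq_coeff m
      (fun j b => (∏ i ∈ Finset.range b, (lam + (i : ℝ))) * q j ^ b / (b.factorial : ℝ)) a
  have hLHS : ∀ N, (∑ c ∈ (Finset.Nat.antidiagonalTuple N a).filter (fun c => ∀ i, 0 < c i),
        ∏ i : Fin N, ((∑ j : Fin m, q j ^ c i) / (c i : ℝ)))
      = coeff a (f ^ N) := by
    intro N
    rw [Finset.sum_filter_of_ne]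
    · rw [sum_adt_prod_eq_coeff N (fun _ r => (∑ j, q j ^ r) / (r : ℝ)) a]
      congr 1
      rw [Finset.prod_const, Finset.card_univ, Fintype.card_fin, hf]
    · intro c hc hne i
      by_contra hpos
      have hci : c i = 0 := Nat.eq_zero_of_not_pos hpos
      refine hne (Finset.prod_eq_zero (Finset.mem_univ i) ?_)
      rw [hci]
      simp
  have hL : (∑ N ∈ Finset.range (a + 1), lam ^ N / (N.factorial : ℝ) *
        ∑ c ∈ (Finset.Nat.antidiagonalTuple N a).filter (fun c => ∀ i, 0 < c i),
          ∏ i : Fin N, ((∑ j : Fin m, q j ^ c i) / (c i : ℝ))) = Lc a := by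
    rw [hLc]
    exact Finset.sum_congr rfl fun N _ => by rw [hLHS N]
  rw [hL, key a]
  exact hRHS.symm
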